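/- Existence of a close junta process matrix (Fact 1, second part, in process-matrix form): with χ and Inf as in the context, there exists a matrix χ'' : Matrix (α × β) (α × β) ℂ that is positive semidefinite, has trace χ'' = 1, satisfies χ'' (a,z) (b,w) = 0 whenever z ≠ 0 or w ≠ 0 (i.e. χ'' is the process matrix of a T-junta process), and satisfies (1/√2)·‖χ − χ''‖ ≤ √Inf + (√2/2)·Inf. -/

import Mathlib

open Finset ComplexOrder
open Matrix

/-- Frobenius norm of a complex matrix. -/
noncomputable def frobNorm {ι κ : Type*} [Fintype ι] [Fintype κ]
    (M : Matrix ι κ ℂ) : ℝ :=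
  Real.sqrt (∑ x, ∑ y, ‖M x y‖ ^ 2)

/-- Influence of a process matrix `χ` (indexed by Pauli strings on `T` and on `T^c`)
on the complement `T^c`: the diagonal weight of strings acting non-trivially on `T^c`. -/
noncomputable def inflCompl (k m : ℕ)
    (χ : Matrix ((Fin k → Fin 4) × (Fin m → Fin 4)) ((Fin k → Fin 4) × (Fin m → Fin 4)) ℂ) : ℝ :=
  ∑ p ∈ Finset.univ.filter
      (fun p : (Fin k → Fin 4) × (Fin m → Fin 4) => p.2 ≠ 0), (χ p p).re

attribute [local instance] Matrix.frobeniusSeminormedAddCommGroup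
  Matrix.frobeniusNormedAddCommGroup Matrix.frobeniusNormedSpace

lemma frobNorm_eq_norm {ι κ : Type*} [Fintype ι] [Fintype κ] (M : Matrix ι κ ℂ) :
    frobNorm M = ‖M‖ := by
  rw [frobNorm, Matrix.frobenius_norm_def, Real.sqrt_eq_rpow]
  congr 1
  simp_rw [Real.rpow_two]

section psd
variable {n : Type*} [Fintype n] [DecidableEq n]

lemma psd_entry_sq_le {M : Matrix n n ℂ} (hM : M.PosSemidef) (x y : n) :
    ‖M x y‖ ^ 2 ≤ (M x x).re * (M y y).re := by
  obtain ⟨B, rfl⟩ : ∃ B : Matrix n n ℂ, M = Bᴴ * B := by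
    open scoped MatrixOrder in
    obtain ⟨B, hB⟩ := CStarAlgebra.nonneg_iff_eq_star_mul_self.mp hM.nonneg
    exact ⟨B, hB⟩
  have hd : ∀ z, ((Bᴴ * B) z z).re = ∑ i, ‖B i z‖ ^ 2 := by
    intro z
    rw [Matrix.mul_apply, Complex.re_sum]
    refine Finset.sum_congr rfl fun i _ => ?_
    rw [Matrix.conjTranspose_apply, RCLike.star_def, RCLike.conj_mul]
    norm_cast
  have h1 : ‖(Bᴴ * B) x y‖ ≤ ∑ i, ‖B i x‖ * ‖B i y‖ := by
    rw [Matrix.mul_apply]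
    refine (norm_sum_le _ _).trans (le_of_eq ?_)
    refine Finset.sum_congr rfl fun i _ => ?_
    rw [norm_mul, Matrix.conjTranspose_apply, norm_star]
  rw [hd, hd]
  calc ‖(Bᴴ * B) x y‖ ^ 2 ≤ (∑ i, ‖B i x‖ * ‖B i y‖) ^ 2 := by
        apply pow_le_pow_left₀ (norm_nonneg _) h1
    _ ≤ (∑ i, ‖B i x‖ ^ 2) * (∑ i, ‖B i y‖ ^ 2) :=
        Finset.sum_mul_sq_le_sq_mul_sq _ _ _

lemma psd_diag_re_nonneg {M : Matrix n n ℂ} (hM : M.PosSemidef) (x : n) :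
    0 ≤ (M x x).re ∧ (M x x).im = 0 := by
  have h := hM.dotProduct_mulVec_nonneg (Pi.single x 1)
  have hx : dotProduct (star (Pi.single x 1)) (M *ᵥ Pi.single x 1) = M x x := by
    simp [dotProduct, Matrix.mulVec, Pi.single_apply, apply_ite]
  rw [hx] at h
  rw [Complex.le_def] at h
  exact ⟨by simpa using h.1, by simpa using h.2.symm⟩

lemma psd_norm_le_trace {M : Matrix n n ℂ} (hM : M.PosSemidef) :
    frobNorm M ≤ M.trace.re := by
  have htr : M.trace.re = ∑ x, (M x x).re := by
    rw [Matrix.trace, Complex.re_sum]; rfl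
  have hb : ∑ x, ∑ y, ‖M x y‖ ^ 2 ≤ (∑ x, (M x x).re) ^ 2 := by
    rw [sq, Finset.sum_mul_sum]
    exact Finset.sum_le_sum fun x _ => Finset.sum_le_sum fun y _ => psd_entry_sq_le hM x y
  rw [frobNorm, htr]
  calc Real.sqrt (∑ x, ∑ y, ‖M x y‖ ^ 2) ≤ Real.sqrt ((∑ x, (M x x).re) ^ 2) :=
        Real.sqrt_le_sqrt hb
    _ = |∑ x, (M x x).re| := Real.sqrt_sq_eq_abs _
    _ = ∑ x, (M x x).re := abs_of_nonneg (Finset.sum_nonneg fun x _ => (psd_diag_re_nonneg hM x).1)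

end psd

theorem exists_close_junta (k m : ℕ)
    (χ : Matrix ((Fin k → Fin 4) × (Fin m → Fin 4)) ((Fin k → Fin 4) × (Fin m → Fin 4)) ℂ)
    (hpsd : χ.PosSemidef) (htr : χ.trace = 1) :
    ∃ χ'' : Matrix ((Fin k → Fin 4) × (Fin m → Fin 4)) ((Fin k → Fin 4) × (Fin m → Fin 4)) ℂ,
      χ''.PosSemidef ∧ χ''.trace = 1 ∧
      (∀ a b : Fin k → Fin 4, ∀ z w : Fin m → Fin 4, (z ≠ 0 ∨ w ≠ 0) → χ'' (a, z) (b, w) = 0) ∧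
      (1 / Real.sqrt 2) * frobNorm (χ - χ'')
        ≤ Real.sqrt (inflCompl k m χ) + (Real.sqrt 2 / 2) * inflCompl k m χ := by
  classical
  set Inf := inflCompl k m χ with hInfdef
  have hdiag := fun p => psd_diag_re_nonneg hpsd p
  have hsum : ∑ p, (χ p p).re = 1 := by
    have h := congrArg Complex.re htr
    rw [Matrix.trace, Complex.re_sum] at h
    simpa using h
  have hInf0 : 0 ≤ Inf := Finset.sum_nonneg fun p _ => (hdiag p).1
  have hInf1 : Inf ≤ 1 := by
    rw [← hsum]
    exact Finset.sum_le_sum_of_subset_of_nonneg (Finset.filter_subset _ _)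
      (fun p _ _ => (hdiag p).1)
  have hs2 : (0:ℝ) < Real.sqrt 2 := Real.sqrt_pos.mpr (by norm_num)
  have hs2sq : Real.sqrt 2 * Real.sqrt 2 = 2 := Real.mul_self_sqrt (by norm_num)
  have hdiagval : ∀ p, (χ p p) = ((χ p p).re : ℂ) := fun p =>
    Complex.ext rfl (by simp [(hdiag p).2])
  by_cases hlt : Inf < 1
  · -- main case : compress and renormalize
    set c : ℝ := (1 - Inf)⁻¹ with hcdef
    have h1I : (0:ℝ) < 1 - Inf := by linarith
    have hc0 : 0 < c := inv_pos.mpr h1I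
    have hcmul : c * (1 - Inf) = 1 := inv_mul_cancel₀ h1I.ne'
    have hc1 : 1 ≤ c := by nlinarith
    set f : (Fin k → Fin 4) × (Fin m → Fin 4) → ℂ := fun p => if p.2 = 0 then 1 else 0 with hfdef
    set χ' : Matrix ((Fin k → Fin 4) × (Fin m → Fin 4)) ((Fin k → Fin 4) × (Fin m → Fin 4)) ℂ := Matrix.diagonal f * χ * Matrix.diagonal f with hχ'def
    have hχ'app : ∀ p q, χ' p q = f p * χ p q * f q := by
      intro p q
      rw [hχ'def, Matrix.mul_diagonal, Matrix.diagonal_mul]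
    have hfstar : star f = f := by
      funext p
      by_cases hp : p.2 = 0 <;> simp [hfdef, hp]
    have hχ'psd : χ'.PosSemidef := by
      have h := hpsd.conjTranspose_mul_mul_same (Matrix.diagonal f)
      rwa [Matrix.diagonal_conjTranspose, hfstar] at h
    have h1 : ∑ p, (χ p p - f p * χ p p * f p)
        = ∑ p ∈ Finset.univ.filter (fun p : (Fin k → Fin 4) × (Fin m → Fin 4) => p.2 ≠ 0), χ p p := by
      rw [Finset.sum_filter]
      refine Finset.sum_congr rfl fun p _ => ?_
      by_cases hp : p.2 = 0 <;> simp [hfdef, hp]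
    have h2 : ∑ p ∈ Finset.univ.filter (fun p : (Fin k → Fin 4) × (Fin m → Fin 4) => p.2 ≠ 0), χ p p = ((Inf : ℝ) : ℂ) := by
      rw [hInfdef, inflCompl, Complex.ofReal_sum]
      exact Finset.sum_congr rfl fun p _ => hdiagval p
    have htrχ' : χ'.trace = ((1 - Inf : ℝ) : ℂ) := by
      have hd : χ.trace - χ'.trace = ((Inf : ℝ) : ℂ) := by
        rw [Matrix.trace, Matrix.trace, ← Finset.sum_sub_distrib]
        rw [← h2, ← h1]
        exact Finset.sum_congr rfl fun p _ => by rw [Matrix.diag_apply, Matrix.diag_apply, hχ'app]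
      rw [htr] at hd
      push_cast
      linear_combination -hd
    -- the rescaled junta matrix
    set g : (Fin k → Fin 4) × (Fin m → Fin 4) → ℂ := fun p => (Real.sqrt c : ℂ) * f p with hgdef
    set χ2 : Matrix ((Fin k → Fin 4) × (Fin m → Fin 4)) ((Fin k → Fin 4) × (Fin m → Fin 4)) ℂ := (Matrix.diagonal g)ᴴ * χ * Matrix.diagonal g with hχ2def
    have hχ2psd : χ2.PosSemidef := hpsd.conjTranspose_mul_mul_same _
    have hcc : (Real.sqrt c : ℂ) * (Real.sqrt c : ℂ) = (c : ℂ) := by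
      rw [← Complex.ofReal_mul, Real.mul_self_sqrt hc0.le]
    have hχ2app : ∀ p q, χ2 p q = (c : ℂ) * (f p * χ p q * f q) := by
      intro p q
      rw [hχ2def, Matrix.diagonal_conjTranspose, Matrix.mul_diagonal, Matrix.diagonal_mul]
      have hst : star (g p) = g p := by
        by_cases hp : p.2 = 0 <;> simp [hgdef, hfdef, hp, Complex.conj_ofReal]
      rw [Pi.star_apply, hst]
      calc g p * χ p q * g q
          = ((Real.sqrt c : ℂ) * (Real.sqrt c : ℂ)) * (f p * χ p q * f q) := by
            rw [hgdef]; ring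
        _ = (c : ℂ) * (f p * χ p q * f q) := by rw [hcc]
    have hχ2eq : χ2 = ((c : ℝ) : ℂ) • χ' := by
      ext p q
      rw [hχ2app, Matrix.smul_apply, hχ'app, smul_eq_mul]
    refine ⟨χ2, hχ2psd, ?_, ?_, ?_⟩
    · rw [hχ2eq, Matrix.trace_smul, htrχ', smul_eq_mul, ← Complex.ofReal_mul, hcmul]
      norm_num
    · intro a b z w h
      rw [hχ2app]
      rcases h with h | h <;> simp [hfdef, h]
    · -- the norm bound
      set ind : (Fin k → Fin 4) × (Fin m → Fin 4) → ℝ := fun p => if p.2 = 0 then 0 else 1 with hinddef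
      have hindsum : ∑ p, ind p * (χ p p).re = Inf := by
        rw [hInfdef, inflCompl, Finset.sum_filter]
        refine Finset.sum_congr rfl fun p _ => ?_
        by_cases hp : p.2 = 0 <;> simp [hinddef, hp]
      have hterm : ∀ p q, ‖(χ - χ') p q‖ ^ 2
          ≤ (ind p + ind q) * ((χ p p).re * (χ q q).re) := by
        intro p q
        rw [Matrix.sub_apply, hχ'app]
        by_cases hp : p.2 = 0 <;> by_cases hq : q.2 = 0
        · simp [hfdef, hp, hq, hinddef]
        all_goals
          have hind1 : (1:ℝ) ≤ ind p + ind q := by simp [hinddef, hp, hq]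
          have h3 : f p * χ p q * f q = 0 := by simp [hfdef, hp, hq]
          rw [h3, sub_zero]
          calc ‖χ p q‖ ^ 2 ≤ (χ p p).re * (χ q q).re := psd_entry_sq_le hpsd p q
            _ = 1 * ((χ p p).re * (χ q q).re) := (one_mul _).symm
            _ ≤ (ind p + ind q) * ((χ p p).re * (χ q q).re) :=
                mul_le_mul_of_nonneg_right hind1 (mul_nonneg (hdiag p).1 (hdiag q).1)
      have hS : ∑ p, ∑ q, ‖(χ - χ') p q‖ ^ 2 ≤ 2 * Inf := by
        calc ∑ p, ∑ q, ‖(χ - χ') p q‖ ^ 2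
            ≤ ∑ p, ∑ q, (ind p + ind q) * ((χ p p).re * (χ q q).re) :=
              Finset.sum_le_sum fun p _ => Finset.sum_le_sum fun q _ => hterm p q
          _ = (∑ p, ind p * (χ p p).re) * (∑ q, (χ q q).re)
              + (∑ p, (χ p p).re) * (∑ q, ind q * (χ q q).re) := by
              rw [Finset.sum_mul_sum, Finset.sum_mul_sum, ← Finset.sum_add_distrib]
              refine Finset.sum_congr rfl fun p _ => ?_
              rw [← Finset.sum_add_distrib]
              refine Finset.sum_congr rfl fun q _ => ?_
              ring
          _ = 2 * Inf := by rw [hindsum, hsum]; ring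
      have hN1 : frobNorm (χ - χ') ≤ Real.sqrt 2 * Real.sqrt Inf := by
        rw [frobNorm]
        calc Real.sqrt (∑ p, ∑ q, ‖(χ - χ') p q‖ ^ 2)
            ≤ Real.sqrt (2 * Inf) := Real.sqrt_le_sqrt hS
          _ = Real.sqrt 2 * Real.sqrt Inf := Real.sqrt_mul (by norm_num) Inf
      have hN2 : frobNorm (χ' - χ2) ≤ Inf := by
        have heq : χ' - χ2 = ((1 - c : ℝ) : ℂ) • χ' := by
          rw [hχ2eq]
          ext p q
          rw [Matrix.sub_apply, Matrix.smul_apply, Matrix.smul_apply, smul_eq_mul, smul_eq_mul]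
          push_cast
          ring
        rw [heq, frobNorm_eq_norm, norm_smul, ← frobNorm_eq_norm]
        have hnorm : ‖((1 - c : ℝ) : ℂ)‖ = c - 1 := by
          rw [Complex.norm_real]
          rw [Real.norm_eq_abs, abs_of_nonpos (by linarith)]
          ring
        have hfr : frobNorm χ' ≤ 1 - Inf := by
          have := psd_norm_le_trace hχ'psd
          rwa [htrχ', Complex.ofReal_re] at this
        rw [hnorm]
        have hfin : (c - 1) * (1 - Inf) = Inf := by linear_combination hcmul
        calc (c - 1) * frobNorm χ' ≤ (c - 1) * (1 - Inf) :=
              mul_le_mul_of_nonneg_left hfr (by linarith)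
          _ = Inf := hfin
      have htri : frobNorm (χ - χ2) ≤ frobNorm (χ - χ') + frobNorm (χ' - χ2) := by
        rw [frobNorm_eq_norm, frobNorm_eq_norm, frobNorm_eq_norm]
        exact norm_sub_le_norm_sub_add_norm_sub _ _ _
      have h12 : 1 / Real.sqrt 2 = Real.sqrt 2 / 2 := by
        rw [div_eq_div_iff hs2.ne' (by norm_num : (2:ℝ) ≠ 0), one_mul, hs2sq]
      calc (1 / Real.sqrt 2) * frobNorm (χ - χ2)
          ≤ (1 / Real.sqrt 2) * (Real.sqrt 2 * Real.sqrt Inf + Inf) := by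
            apply mul_le_mul_of_nonneg_left _ (by positivity)
            exact htri.trans (add_le_add hN1 hN2)
        _ = Real.sqrt Inf + (Real.sqrt 2 / 2) * Inf := by
            rw [h12, mul_add]
            congr 1
            rw [← mul_assoc, div_mul_eq_mul_div, hs2sq]
            norm_num
  · -- degenerate case Inf = 1
    have hInfeq : Inf = 1 := le_antisymm hInf1 (not_lt.mp hlt)
    set p0 : (Fin k → Fin 4) × (Fin m → Fin 4) := ((fun _ => 0 : Fin k → Fin 4), (0 : Fin m → Fin 4)) with hp0
    set M : Matrix ((Fin k → Fin 4) × (Fin m → Fin 4)) ((Fin k → Fin 4) × (Fin m → Fin 4)) ℂ := Matrix.diagonal (Pi.single p0 (1:ℂ)) with hM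
    have hMpsd : M.PosSemidef := by
      refine Matrix.PosSemidef.diagonal fun p => ?_
      by_cases hp : p = p0 <;> simp [Pi.single_apply, hp]
    have hMtr : M.trace = 1 := by
      rw [hM, Matrix.trace_diagonal]
      simp
    refine ⟨M, hMpsd, hMtr, ?_, ?_⟩
    · intro a b z w h
      rw [hM, Matrix.diagonal_apply]
      rcases eq_or_ne ((a, z) : (Fin k → Fin 4) × (Fin m → Fin 4)) (b, w) with he | he
      · rw [if_pos he, Pi.single_apply, if_neg]
        intro hcon
        have hz0 : z = 0 := by
          have := congrArg Prod.snd hcon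
          simpa [hp0] using this
        have hzw : z = w := congrArg Prod.snd he
        rcases h with h | h
        · exact h hz0
        · exact h (hzw ▸ hz0)
      · rw [if_neg he]
    · have hfr1 : frobNorm χ ≤ 1 := by
        have h := psd_norm_le_trace hpsd
        rw [htr] at h
        simpa using h
      have hfr2 : frobNorm M ≤ 1 := by
        have h := psd_norm_le_trace hMpsd
        rw [hMtr] at h
        simpa using h
      have htri : frobNorm (χ - M) ≤ frobNorm χ + frobNorm M := by
        rw [frobNorm_eq_norm, frobNorm_eq_norm, frobNorm_eq_norm]
        exact norm_sub_le _ _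
      have hle2 : frobNorm (χ - M) ≤ 2 := by linarith
      have hsInf : Real.sqrt Inf = 1 := by rw [hInfeq, Real.sqrt_one]
      rw [hsInf, hInfeq]
      have hmain : (1 / Real.sqrt 2) * frobNorm (χ - M) ≤ (1 / Real.sqrt 2) * 2 :=
        mul_le_mul_of_nonneg_left hle2 (by positivity)
      refine hmain.trans ?_
      rw [div_mul_eq_mul_div, one_mul, div_le_iff₀ hs2]
      nlinarith [hs2, hs2sq, sq_nonneg (Real.sqrt 2 - 1)]
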